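/- Let T_σ = {A ⊑ ∃σ.M ⊓ X_0} ∪ {X_i ⊑ ∃r.X_{i+1} ⊓ ∃s.X_{i+1} : 0 ≤ i < n} for σ ∈ {r,s}ⁿ, and let S_N = {T_σ : σ ∈ {r,s}ⁿ}. For every DL-Lite concept inclusion B ⊑ D over the signature of the T_σ (where B is a basic concept, i.e., a concept name or ∃ρ.⊤ for a role ρ, and D is an arbitrary concept expression possibly with inverse roles): either T_σ ⊨ B ⊑ D for every T_σ ∈ S_N, or there is at most one T_σ ∈ S_N such that T_σ ⊨ B ⊑ D. -/

import Mathlib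

/-- EL concept expressions over concept names `C` and (possibly inverse)
roles `R`. -/
inductive ELC (C R : Type) : Type where
  | top : ELC C R
  | cn : C → ELC C R
  | conj : ELC C R → ELC C R → ELC C R
  | ex : R → ELC C R → ELC C R

/-- Roles: role names and inverse roles. -/
inductive Role (R : Type) : Type where
  | nm : R → Role R
  | inv : R → Role R

/-- An interpretation. -/
structure Interp (C R : Type) where
  dom : Type
  cname : C → Set dom
  rname : R → Set (dom × dom)

/-- Semantics of roles; inverse roles denote converse relations. -/
def Interp.roleSem {C R : Type} (I : Interp C R) : Role R → Set (I.dom × I.dom)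
  | .nm r => I.rname r
  | .inv r => {p | (p.2, p.1) ∈ I.rname r}

/-- Semantics of concept expressions (with roles possibly inverse). -/
def Interp.semI {C R : Type} (I : Interp C R) : ELC C (Role R) → Set I.dom
  | .top => Set.univ
  | .cn A => I.cname A
  | .conj c d => I.semI c ∩ I.semI d
  | .ex ρ c => {x | ∃ y, (x, y) ∈ I.roleSem ρ ∧ y ∈ I.semI c}

/-- The pairwise distinct concept names `A`, `M`, `X_0, X_1, …`. -/
inductive CN : Type where
  | A : CN
  | M : CN
  | X : ℕ → CN

/-- The two distinct role names `r` and `s`. -/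
inductive RN : Type where
  | r : RN
  | s : RN

/-- `∃σ.C` for a word `σ` over `{r,s}`: nested existential restrictions. -/
def exSeq (w : List RN) (c : ELC CN (Role RN)) : ELC CN (Role RN) :=
  w.foldr (fun ρ acc => .ex (.nm ρ) acc) c

/-- The TBox `T_0 = {X_i ⊑ ∃r.X_{i+1} ⊓ ∃s.X_{i+1} : 0 ≤ i < n}`. -/
def T0 (n : ℕ) : List (ELC CN (Role RN) × ELC CN (Role RN)) :=
  (List.range n).map fun i =>
    (.cn (.X i), .conj (.ex (.nm .r) (.cn (.X (i + 1)))) (.ex (.nm .s) (.cn (.X (i + 1)))))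

/-- The TBox `T_σ = {A ⊑ ∃σ.M ⊓ X_0} ∪ T_0`. -/
def Tsig (n : ℕ) (σ : List RN) : List (ELC CN (Role RN) × ELC CN (Role RN)) :=
  (.cn .A, .conj (exSeq σ (.cn .M)) (.cn (.X 0))) :: T0 n

/-- `T ⊨ c ⊑ d`: the inclusion holds in every model of the TBox `T`. -/
def Entails (T : List (ELC CN (Role RN) × ELC CN (Role RN)))
    (c d : ELC CN (Role RN)) : Prop :=
  ∀ I : Interp CN RN, (∀ p ∈ T, I.semI p.1 ⊆ I.semI p.2) → I.semI c ⊆ I.semI d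

/-- A basic concept: a concept name or `∃ρ.⊤` for a role `ρ`. -/
def IsBasic (b : ELC CN (Role RN)) : Prop :=
  (∃ a, b = .cn a) ∨ ∃ ρ, b = .ex ρ .top

/-- The concept names allowed in the signature `{A, M, X_0, …, X_n, r, s}`. -/
def goodCN (n : ℕ) : CN → Prop
  | .A => True
  | .M => True
  | .X i => i ≤ n

/-- The concept uses only concept names from the signature of `T_σ`. -/
def InSig (n : ℕ) : ELC CN (Role RN) → Prop
  | .top => True
  | .cn a => goodCN n a
  | .conj c d => InSig n c ∧ InSig n d
  | .ex _ c => InSig n c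

section Infra
variable {C R : Type}

/-- Homomorphisms preserve semantics of positive concepts. -/
theorem hom_pres {I J : Interp C R} (h : I.dom → J.dom)
    (hc : ∀ a x, x ∈ I.cname a → h x ∈ J.cname a)
    (hr : ∀ r x y, (x, y) ∈ I.rname r → (h x, h y) ∈ J.rname r) :
    ∀ c : ELC C (Role R), ∀ x, x ∈ I.semI c → h x ∈ J.semI c := by
  intro c
  induction c with
  | top => intro x _; trivial
  | cn a => intro x hx; exact hc a x hx
  | conj c d ihc ihd => intro x hx; exact ⟨ihc x hx.1, ihd x hx.2⟩
  | ex ρ c ih =>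
    intro x hx
    obtain ⟨y, hxy, hy⟩ := hx
    refine ⟨h y, ?_, ih y hy⟩
    cases ρ with
    | nm r => exact hr r x y hxy
    | inv r => exact hr r y x hxy

/-- Product of interpretations. -/
def prodI (I J : Interp C R) : Interp C R where
  dom := I.dom × J.dom
  cname a := {p | p.1 ∈ I.cname a ∧ p.2 ∈ J.cname a}
  rname r := {p | (p.1.1, p.2.1) ∈ I.rname r ∧ (p.1.2, p.2.2) ∈ J.rname r}

theorem prod_sem {I J : Interp C R} (c : ELC C (Role R)) :
    ∀ x y, x ∈ I.semI c → y ∈ J.semI c → (x, y) ∈ (prodI I J).semI c := by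
  induction c with
  | top => intro x y _ _; trivial
  | cn a => intro x y hx hy; exact ⟨hx, hy⟩
  | conj c d ihc ihd =>
    intro x y hx hy; exact ⟨ihc x y hx.1 hy.1, ihd x y hx.2 hy.2⟩
  | ex ρ c ih =>
    intro x y hx hy
    obtain ⟨x', hxx, hx'⟩ := hx
    obtain ⟨y', hyy, hy'⟩ := hy
    refine ⟨(x', y'), ?_, ih x' y' hx' hy'⟩
    cases ρ with
    | nm r => exact ⟨hxx, hyy⟩
    | inv r => exact ⟨hxx, hyy⟩

/-- Restriction of an interpretation to a set. -/
def restr (I : Interp C R) (S : Set I.dom) : Interp C R where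
  dom := S
  cname a := {p | (p : I.dom) ∈ I.cname a}
  rname r := {p | ((p.1 : I.dom), (p.2 : I.dom)) ∈ I.rname r}

/-- If `S` is closed under edges in both directions, restriction preserves
membership of positive concepts. -/
theorem restr_sem {I : Interp C R} {S : Set I.dom}
    (hS : ∀ r x y, (x, y) ∈ I.rname r → (x ∈ S ↔ y ∈ S))
    (c : ELC C (Role R)) :
    ∀ x (hx : x ∈ S), x ∈ I.semI c → (⟨x, hx⟩ : S) ∈ (restr I S).semI c := by
  induction c with
  | top => intro x hx _; trivial
  | cn a => intro x hx h; exact h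
  | conj c d ihc ihd => intro x hx h; exact ⟨ihc x hx h.1, ihd x hx h.2⟩
  | ex ρ c ih =>
    intro x hx h
    obtain ⟨y, hxy, hy⟩ := h
    have hyS : y ∈ S := by
      cases ρ with
      | nm r => exact (hS r x y hxy).mp hx
      | inv r => exact (hS r y x hxy).mpr hx
    refine ⟨⟨y, hyS⟩, ?_, ih y hyS hy⟩
    cases ρ with
    | nm r => exact hxy
    | inv r => exact hxy

end Infra
section Erase

/-- The interpretation with `A` emptied out. -/
def eraseA (I : Interp CN RN) : Interp CN RN where
  dom := I.dom
  cname a := match a with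
    | .A => ∅
    | a => I.cname a
  rname := I.rname

theorem eraseA_cname (I : Interp CN RN) {a : CN} (ha : a ≠ .A) :
    (eraseA I).cname a = I.cname a := by
  cases a with
  | A => exact absurd rfl ha
  | M => rfl
  | X i => rfl

theorem eraseA_mono (I : Interp CN RN) (c : ELC CN (Role RN)) :
    (eraseA I).semI c ⊆ I.semI c := by
  intro x hx
  have := hom_pres (I := eraseA I) (J := I) id
    (by
      intro a x hx
      cases a with
      | A => exact absurd hx (by simp [eraseA]; exact fun h => h)
      | M => exact hx
      | X i => exact hx)
    (by intro r x y h; exact h) c x hx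
  exact this

theorem eraseA_T0 (I : Interp CN RN) (n : ℕ)
    (hI : ∀ p ∈ T0 n, I.semI p.1 ⊆ I.semI p.2) :
    ∀ p ∈ T0 n, (eraseA I).semI p.1 ⊆ (eraseA I).semI p.2 := by
  intro p hp
  simp only [T0, List.mem_map, List.mem_range] at hp
  obtain ⟨i, hi, rfl⟩ := hp
  have h := hI _ (by simp only [T0, List.mem_map, List.mem_range]; exact ⟨i, hi, rfl⟩)
  intro x hx
  have hx' : x ∈ I.semI (.cn (.X i)) := hx
  have := h hx'
  obtain ⟨⟨y, hy1, hy2⟩, ⟨z, hz1, hz2⟩⟩ := this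
  exact ⟨⟨y, hy1, hy2⟩, ⟨z, hz1, hz2⟩⟩

/-- For basic `B` other than the concept name `A`, entailment does not
depend on `σ`. -/
theorem entails_indep (n : ℕ) (B D : ELC CN (Role RN)) (hB : IsBasic B)
    (hBA : B ≠ .cn .A) (σ σ' : List RN)
    (h : Entails (Tsig n σ) B D) : Entails (Tsig n σ') B D := by
  intro I hI x hx
  have hT0 : ∀ p ∈ T0 n, I.semI p.1 ⊆ I.semI p.2 := by
    intro p hp; exact hI p (by simp [Tsig, hp])
  have hmod : ∀ p ∈ Tsig n σ, (eraseA I).semI p.1 ⊆ (eraseA I).semI p.2 := by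
    intro p hp
    rcases List.mem_cons.mp hp with hp | hp
    · subst hp
      intro y hy
      exact absurd hy (by simp [Interp.semI, eraseA]; exact fun h => h)
    · exact eraseA_T0 I n hT0 p hp
  have hxB : x ∈ (eraseA I).semI B := by
    rcases hB with ⟨a, rfl⟩ | ⟨ρ, rfl⟩
    · have ha : a ≠ CN.A := fun h' => hBA (by rw [h'])
      show x ∈ (eraseA I).cname a
      rw [eraseA_cname I ha]; exact hx
    · obtain ⟨y, hy1, hy2⟩ := hx
      exact ⟨y, hy1, trivial⟩
  exact eraseA_mono I D (h (eraseA I) hmod hxB)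

end Erase
section Canon

/-- The `i`-th node on the `σ`-path of the canonical model (`pnode 0` is the
root). -/
def pnode (i : ℕ) : List RN ⊕ ℕ :=
  match i with
  | 0 => .inl []
  | j + 1 => .inr j

/-- The canonical model of `T_σ`.  Tree nodes are (reversed) words over
`{r,s}` of length at most `n`; path nodes are `pnode 1, …, pnode n`. -/
def canon (n : ℕ) (σ : List RN) : Interp CN RN where
  dom := List RN ⊕ ℕ
  cname a := match a with
    | .A => {.inl []}
    | .M => {pnode n}
    | .X i => {x | ∃ w, x = .inl w ∧ w.length = i ∧ i ≤ n}
  rname ρ := {p | (∃ w : List RN, w.length < n ∧ p = (.inl w, .inl (ρ :: w))) ∨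
    (∃ i : Fin σ.length, σ.get i = ρ ∧ p = (pnode i, pnode (i + 1)))}

theorem canon_path_sem (n : ℕ) (σ : List RN) (hσ : σ.length = n) :
    ∀ (t : List RN) (j : ℕ), σ.drop j = t → j ≤ n →
      pnode j ∈ (canon n σ).semI (exSeq t (.cn .M)) := by
  intro t
  induction t with
  | nil =>
    intro j hd _
    have hj : σ.length ≤ j := by
      by_contra hc
      push_neg at hc
      have := congrArg List.length hd
      simp [Nat.sub_eq_zero_iff_le] at this
      omega
    have hjn : j = n := by omega
    show pnode j ∈ (canon n σ).cname .M
    rw [hjn]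
    simp [canon]
    exact rfl
  | cons ρ t ih =>
    intro j hd hj
    have hjlt : j < σ.length := by
      by_contra hc
      push_neg at hc
      rw [List.drop_eq_nil_of_le hc] at hd
      exact absurd hd (by simp)
    have hget : σ.get ⟨j, hjlt⟩ = ρ := by
      have h0 : (σ.drop j).head? = some ρ := by rw [hd]; rfl
      rw [List.head?_drop] at h0
      simp only [List.get_eq_getElem]
      rw [List.getElem?_eq_getElem hjlt] at h0
      exact Option.some.inj h0
    have hdt : σ.drop (j + 1) = t := by
      have := congrArg List.tail hd
      rwa [List.tail_drop] at this
    refine ⟨pnode (j + 1), Or.inr ⟨⟨j, hjlt⟩, hget, rfl⟩, ?_⟩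
    exact ih (j + 1) hdt (by omega)

theorem canon_model (n : ℕ) (σ : List RN) (hσ : σ.length = n) :
    ∀ p ∈ Tsig n σ, (canon n σ).semI p.1 ⊆ (canon n σ).semI p.2 := by
  intro p hp
  rcases List.mem_cons.mp hp with hp | hp
  · subst hp
    intro x hx
    have hx' : x = Sum.inl [] := hx
    subst hx'
    constructor
    · exact canon_path_sem n σ hσ σ 0 (by simp) (by omega)
    · exact ⟨[], rfl, rfl, by omega⟩
  · simp only [T0, List.mem_map, List.mem_range] at hp
    obtain ⟨i, hi, rfl⟩ := hp
    intro x hx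
    obtain ⟨w, rfl, hw, _⟩ := hx
    subst hw
    constructor
    · exact ⟨.inl (.r :: w), Or.inl ⟨w, by omega, rfl⟩, ⟨.r :: w, rfl, by simp, by omega⟩⟩
    · exact ⟨.inl (.s :: w), Or.inl ⟨w, by omega, rfl⟩, ⟨.s :: w, rfl, by simp, by omega⟩⟩

/-- Chain extraction from `exSeq`. -/
theorem exseq_chain (I : Interp CN RN) (c : ELC CN (Role RN)) :
    ∀ (w : List RN) (x : I.dom), x ∈ I.semI (exSeq w c) →
      ∃ g : ℕ → I.dom, g 0 = x ∧
        (∀ i : Fin w.length, (g i, g (i + 1)) ∈ I.rname (w.get i)) ∧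
        g w.length ∈ I.semI c := by
  intro w
  induction w with
  | nil =>
    intro x hx
    exact ⟨fun _ => x, rfl, fun i => (Nat.not_lt_zero i.1 (by simpa using i.2)).elim, hx⟩
  | cons ρ w ih =>
    intro x hx
    obtain ⟨y, hxy, hy⟩ := hx
    obtain ⟨g, hg0, hge, hgl⟩ := ih y hy
    refine ⟨fun i => match i with | 0 => x | j + 1 => g j, rfl, ?_, hgl⟩
    intro i
    match i with
    | ⟨0, h0⟩ => simpa [hg0, Interp.roleSem] using hxy
    | ⟨j + 1, hj⟩ =>
      exact hge ⟨j, by simpa using hj⟩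

/-- Generic tree recursion. -/
def treeF {α : Type} (step : RN → ℕ → α → α) (x : α) : List RN → α
  | [] => x
  | ρ :: w => step ρ w.length (treeF step x w)

theorem canon_complete (n : ℕ) (σ : List RN) (hσ : σ.length = n)
    (D : ELC CN (Role RN))
    (h : Sum.inl ([] : List RN) ∈ (canon n σ).semI D) :
    Entails (Tsig n σ) (.cn .A) D := by
  intro I hI x hx
  -- extract the axioms of the model
  have hA := hI _ List.mem_cons_self hx
  obtain ⟨hpath, hX0⟩ := hA
  have Xax : ∀ i, i < n → ∀ y ∈ I.cname (.X i), ∀ ρ : RN,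
      ∃ z, (y, z) ∈ I.rname ρ ∧ z ∈ I.cname (.X (i + 1)) := by
    intro i hi y hy ρ
    have hmem : ((.cn (.X i) : ELC CN (Role RN)),
        (.conj (.ex (.nm .r) (.cn (.X (i + 1)))) (.ex (.nm .s) (.cn (.X (i + 1))))
          : ELC CN (Role RN))) ∈ Tsig n σ := by
      simp only [Tsig, T0, List.mem_cons, List.mem_map, List.mem_range]
      exact Or.inr ⟨i, hi, rfl⟩
    have := hI _ hmem hy
    obtain ⟨⟨z1, hz1, hz1'⟩, ⟨z2, hz2, hz2'⟩⟩ := this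
    cases ρ with
    | r => exact ⟨z1, hz1, hz1'⟩
    | s => exact ⟨z2, hz2, hz2'⟩
  -- the path chain
  obtain ⟨g, hg0, hge, hgl⟩ := exseq_chain I (.cn .M) σ x hpath
  -- the tree map
  classical
  let step : RN → ℕ → I.dom → I.dom := fun ρ i y =>
    if h : i < n ∧ y ∈ I.cname (.X i) then (Xax i h.1 y h.2 ρ).choose else y
  have tinv : ∀ w : List RN, w.length ≤ n →
      treeF step x w ∈ I.cname (.X w.length) := by
    intro w
    induction w with
    | nil => intro _; exact hX0
    | cons ρ w ih =>
      intro hlen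
      have hwn : w.length < n := by simpa using hlen
      have hw := ih (by omega)
      show step ρ w.length (treeF step x w) ∈ _
      simp only [step, dif_pos (And.intro hwn hw)]
      exact (Xax w.length hwn _ hw ρ).choose_spec.2
  have tedge : ∀ (w : List RN) (ρ : RN), w.length < n →
      (treeF step x w, treeF step x (ρ :: w)) ∈ I.rname ρ := by
    intro w ρ hlen
    have hw := tinv w (by omega)
    show (_, step ρ w.length (treeF step x w)) ∈ _
    simp only [step, dif_pos (And.intro hlen hw)]
    exact (Xax w.length hlen _ hw ρ).choose_spec.1
  -- the homomorphism
  let h' : (canon n σ).dom → I.dom := fun z =>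
    match z with
    | .inl w => treeF step x w
    | .inr j => g (j + 1)
  have hpn : ∀ i : ℕ, h' (pnode i) = g i := by
    intro i
    cases i with
    | zero => simpa [h', pnode, treeF] using hg0.symm
    | succ j => rfl
  have hcpres : ∀ a z, z ∈ (canon n σ).cname a → h' z ∈ I.cname a := by
    intro a z hz
    cases a with
    | A =>
      have : z = Sum.inl [] := hz
      subst this
      simpa [h', treeF, Interp.semI] using hx
    | M =>
      have : z = pnode n := hz
      subst this
      rw [hpn n, ← hσ]
      exact hgl
    | X i =>
      obtain ⟨w, rfl, rfl, hle⟩ := hz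
      exact tinv w hle
  have hrpres : ∀ (ρ : RN) z z', (z, z') ∈ (canon n σ).rname ρ →
      (h' z, h' z') ∈ I.rname ρ := by
    intro ρ z z' hzz
    rcases hzz with ⟨w, hwn, heq⟩ | ⟨i, hget, heq⟩
    · have h1 : z = Sum.inl w := congrArg Prod.fst heq
      have h2 : z' = Sum.inl (ρ :: w) := congrArg Prod.snd heq
      subst h1; subst h2
      exact tedge w ρ hwn
    · have h1 : z = pnode i := congrArg Prod.fst heq
      have h2 : z' = pnode (i + 1) := congrArg Prod.snd heq
      subst h1; subst h2
      rw [hpn, hpn, ← hget]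
      exact hge i
  have := hom_pres h' hcpres hrpres D (Sum.inl []) h
  simpa [h', treeF] using this

theorem canon_sound (n : ℕ) (σ : List RN) (hσ : σ.length = n)
    (D : ELC CN (Role RN)) (h : Entails (Tsig n σ) (.cn .A) D) :
    Sum.inl ([] : List RN) ∈ (canon n σ).semI D := by
  exact h (canon n σ) (canon_model n σ hσ) (show _ ∈ (canon n σ).cname .A from rfl)

end Canon
section Main

/-- The (reversed) word associated to a node of the canonical model. -/
def wd (σ : List RN) : List RN ⊕ ℕ → List RN
  | .inl w => w
  | .inr j => (σ.take (j + 1)).reverse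

theorem wd_pnode (σ : List RN) (i : ℕ) : wd σ (pnode i) = (σ.take i).reverse := by
  cases i with
  | zero => simp [pnode, wd]
  | succ j => rfl

theorem pnode_inr {i j : ℕ} (h : pnode i = Sum.inr j) : i = j + 1 := by
  cases i with
  | zero => exact (Sum.inl_ne_inr h).elim
  | succ m => rw [Sum.inr.inj (h : Sum.inr m = Sum.inr j)]

theorem pnode_succ (j : ℕ) : pnode (j + 1) = Sum.inr j := rfl

theorem canon_edge {n : ℕ} {σ : List RN} {ρ : RN} {x x' : (canon n σ).dom}
    (hσ : σ.length = n) (h : (x, x') ∈ (canon n σ).rname ρ) :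
    wd σ x' = ρ :: wd σ x ∧ (wd σ x).length < n := by
  rcases h with ⟨w, hwn, heq⟩ | ⟨i, hget, heq⟩
  · have h1 : x = Sum.inl w := congrArg Prod.fst heq
    have h2 : x' = Sum.inl (ρ :: w) := congrArg Prod.snd heq
    subst h1; subst h2
    exact ⟨rfl, hwn⟩
  · have h1 : x = pnode i := congrArg Prod.fst heq
    have h2 : x' = pnode ((i : ℕ) + 1) := congrArg Prod.snd heq
    subst h1; subst h2
    rw [wd_pnode, wd_pnode]
    have hi : (i : ℕ) < σ.length := i.2
    constructor
    · have ht : σ.take ((i : ℕ) + 1) = σ.take i ++ [σ.get i] := by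
        rw [List.take_succ, List.getElem?_eq_getElem hi]
        rfl
      rw [ht, List.reverse_append, hget]
      rfl
    · rw [List.length_reverse, List.length_take]
      omega

theorem two_entail (n : ℕ) (D : ELC CN (Role RN)) (σ₁ σ₂ : List RN)
    (h1l : σ₁.length = n) (h2l : σ₂.length = n) (hne : σ₁ ≠ σ₂)
    (e1 : Entails (Tsig n σ₁) (.cn .A) D)
    (e2 : Entails (Tsig n σ₂) (.cn .A) D) :
    ∀ σ : List RN, σ.length = n → Entails (Tsig n σ) (.cn .A) D := by
  -- a position where σ₁ and σ₂ differ
  obtain ⟨k, hk, hkd⟩ : ∃ k, ∃ hk : k < n,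
      σ₁.get ⟨k, by omega⟩ ≠ σ₂.get ⟨k, by omega⟩ := by
    by_contra hc
    push_neg at hc
    refine hne (List.ext_get (by omega) ?_)
    intro i h1 h2
    have := hc i (by omega)
    simpa using this
  intro σ hσ
  -- roots satisfy D in the two canonical models
  have r1 := canon_sound n σ₁ h1l D e1
  have r2 := canon_sound n σ₂ h2l D e2
  set P := prodI (canon n σ₁) (canon n σ₂) with hP
  have hprod : ((Sum.inl [], Sum.inl []) : P.dom) ∈ P.semI D :=
    prod_sem D _ _ r1 r2
  -- the set avoiding the diagonal path suffix beyond the difference position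
  set S : Set P.dom := {p | ¬ ∃ j, k ≤ j ∧ p = (Sum.inr j, Sum.inr j)} with hS
  have hcl : ∀ ρ x y, (x, y) ∈ P.rname ρ → (x ∈ S ↔ y ∈ S) := by
    intro ρ x y hxy
    obtain ⟨hxa, hxb⟩ := hxy
    obtain ⟨xa, xb⟩ := x
    obtain ⟨ya, yb⟩ := y
    simp only [hS, Set.mem_setOf_eq, not_iff_not (a := ∃ _, _)]
    show (¬ _) ↔ (¬ _)
    refine not_iff_not.mpr ?_
    constructor
    · -- edges out of the removed set stay inside it
      rintro ⟨j, hjk, heq⟩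
      replace heq := Prod.mk.inj heq
      obtain ⟨hxa', hxb'⟩ := heq
      subst hxa'; subst hxb'
      rcases hxa with ⟨w, _, heq⟩ | ⟨i, hget1, heq⟩
      · exact (Sum.inr_ne_inl (congrArg Prod.fst heq)).elim
      · have h1 : (i : ℕ) = j + 1 := pnode_inr (congrArg Prod.fst heq).symm
        have h2 : ya = pnode ((i : ℕ) + 1) := congrArg Prod.snd heq
        rcases hxb with ⟨w, _, heq'⟩ | ⟨i', hget2, heq'⟩
        · exact (Sum.inr_ne_inl (congrArg Prod.fst heq')).elim
        · have h1' : (i' : ℕ) = j + 1 := pnode_inr (congrArg Prod.fst heq').symm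
          have h2' : yb = pnode ((i' : ℕ) + 1) := congrArg Prod.snd heq'
          refine ⟨j + 1, by omega, ?_⟩
          rw [h2, h2', h1, h1']; refine Prod.ext_iff.mpr ?_
          exact ⟨pnode_succ _, pnode_succ _⟩
    · -- edges into the removed set come from inside it
      rintro ⟨j, hjk, heq⟩
      replace heq := Prod.mk.inj heq
      obtain ⟨hya', hyb'⟩ := heq
      subst hya'; subst hyb'
      rcases hxa with ⟨w, _, heq⟩ | ⟨i, hget1, heq⟩
      · exact (Sum.inr_ne_inl (congrArg Prod.snd heq)).elim
      · have h1 : (i : ℕ) + 1 = j + 1 := pnode_inr (congrArg Prod.snd heq).symm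
        have h2 : xa = pnode i := congrArg Prod.fst heq
        rcases hxb with ⟨w, _, heq'⟩ | ⟨i', hget2, heq'⟩
        · exact (Sum.inr_ne_inl (congrArg Prod.snd heq')).elim
        · have h1' : (i' : ℕ) + 1 = j + 1 := pnode_inr (congrArg Prod.snd heq').symm
          have h2' : xb = pnode i' := congrArg Prod.fst heq'
          -- j = k is impossible: the labels at position k differ
          have hjne : j ≠ k := by
            intro hjk'
            subst hjk'
            apply hkd
            have e1' : σ₁.get ⟨j, by omega⟩ = ρ := by
              have : i = ⟨j, by omega⟩ := Fin.ext (show (i : ℕ) = j by omega)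
              rw [← this]; exact hget1
            have e2' : σ₂.get ⟨j, by omega⟩ = ρ := by
              have : i' = ⟨j, by omega⟩ := Fin.ext (show (i' : ℕ) = j by omega)
              rw [← this]; exact hget2
            rw [e1', e2']
          -- so j > k, and the source is the previous diagonal pair
          obtain ⟨m, hm⟩ : ∃ m, j = m + 1 := ⟨j - 1, by omega⟩
          refine ⟨m, by omega, ?_⟩
          rw [h2, h2']; refine Prod.ext_iff.mpr ?_
          have hi : (i : ℕ) = m + 1 := by omega
          have hi' : (i' : ℕ) = m + 1 := by omega
          constructor
          · rw [show pnode (i : ℕ) = pnode (m + 1) from by rw [hi]]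
            exact pnode_succ m
          · rw [show pnode (i' : ℕ) = pnode (m + 1) from by rw [hi']]
            exact pnode_succ m
  have hrootS : ((Sum.inl [], Sum.inl []) : P.dom) ∈ S := by
    rintro ⟨j, _, heq⟩
    exact Sum.inl_ne_inr (congrArg Prod.fst heq)
  have hres := restr_sem hcl D _ hrootS hprod
  -- homomorphism from the restricted product into `canon n σ`
  let g : (restr P S).dom → (canon n σ).dom := fun p =>
    Sum.inl ((wd σ₁ p.val.1).take (min (wd σ₁ p.val.1).length (wd σ₂ p.val.2).length))
  have hgc : ∀ a z, z ∈ (restr P S).cname a → g z ∈ (canon n σ).cname a := by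
    intro a z hz
    cases a with
    | A =>
      obtain ⟨hz1, hz2⟩ := hz
      have h1 : z.val.1 = Sum.inl [] := hz1
      have h2 : z.val.2 = Sum.inl [] := hz2
      show Sum.inl _ ∈ ({Sum.inl []} : Set ((canon n σ).dom))
      rw [h1, h2]
      rfl
    | M =>
      obtain ⟨hz1, hz2⟩ := hz
      have h1 : z.val.1 = pnode n := hz1
      have h2 : z.val.2 = pnode n := hz2
      exfalso
      apply z.2
      obtain ⟨m, hm⟩ : ∃ m, n = m + 1 := ⟨n - 1, by omega⟩
      refine ⟨m, by omega, Prod.ext ?_ ?_⟩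
      · rw [h1, hm]; exact pnode_succ m
      · rw [h2, hm]; exact pnode_succ m
    | X i =>
      obtain ⟨hz1, hz2⟩ := hz
      obtain ⟨w1, hw1, hl1, hle⟩ := hz1
      obtain ⟨w2, hw2, hl2, _⟩ := hz2
      refine ⟨w1, ?_, ?_, hle⟩
      · show Sum.inl _ = Sum.inl w1
        rw [hw1, hw2]
        show Sum.inl (w1.take _) = _
        rw [show wd σ₁ (Sum.inl w1) = w1 from rfl, show wd σ₂ (Sum.inl w2) = w2 from rfl,
          hl2, ← hl1, min_self, List.take_length]
      · exact hl1
  have hgr : ∀ (ρ : RN) z z', (z, z') ∈ (restr P S).rname ρ →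
      (g z, g z') ∈ (canon n σ).rname ρ := by
    intro ρ z z' hzz
    obtain ⟨h1, h2⟩ := hzz
    have h1' : (z.val.1, z'.val.1) ∈ (canon n σ₁).rname ρ := h1
    have h2' : (z.val.2, z'.val.2) ∈ (canon n σ₂).rname ρ := h2
    obtain ⟨hw1, hn1⟩ := canon_edge h1l h1'
    obtain ⟨hw2, hn2⟩ := canon_edge h2l h2'
    refine Or.inl ⟨(wd σ₁ z.val.1).take (min (wd σ₁ z.val.1).length (wd σ₂ z.val.2).length),
      ?_, ?_⟩
    · rw [List.length_take]
      omega
    · have hgz' : g z' = Sum.inl (ρ :: (wd σ₁ z.val.1).take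
          (min (wd σ₁ z.val.1).length (wd σ₂ z.val.2).length)) := by
        show Sum.inl _ = _
        rw [hw1, hw2, List.length_cons, List.length_cons, Nat.succ_min_succ,
          List.take_succ_cons]
      refine Prod.ext_iff.mpr ?_
      exact ⟨rfl, hgz'⟩
  have hfin := hom_pres g hgc hgr D ⟨(Sum.inl [], Sum.inl []), hrootS⟩ hres
  have hroot : Sum.inl ([] : List RN) ∈ (canon n σ).semI D := hfin
  exact canon_complete n σ hσ D hroot

end Main
/-- for every DL-Lite CI `B ⊑ D` over the signature of the
`T_σ` (with `B` basic), either `T_σ ⊨ B ⊑ D` for every `σ`, or there is at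
most one `σ` with `T_σ ⊨ B ⊑ D`. -/
theorem dllite_ci_dichotomy (n : ℕ) (B D : ELC CN (Role RN))
    (hB : IsBasic B) (hsB : InSig n B) (hsD : InSig n D) :
    (∀ σ : List RN, σ.length = n → Entails (Tsig n σ) B D) ∨
    (∀ σ₁ σ₂ : List RN, σ₁.length = n → σ₂.length = n →
      Entails (Tsig n σ₁) B D → Entails (Tsig n σ₂) B D → σ₁ = σ₂) := by
  by_cases hall : ∀ σ : List RN, σ.length = n → Entails (Tsig n σ) B D
  · exact Or.inl hall
  · right
    intro σ₁ σ₂ hl1 hl2 he1 he2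
    by_cases hBA : B = .cn .A
    · subst hBA
      by_contra hne
      exact hall (two_entail n D σ₁ σ₂ hl1 hl2 hne he1 he2)
    · exfalso
      apply hall
      intro σ hσ
      exact entails_indep n B D hB hBA σ₁ σ he1
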